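/- With the definitions below, for all u_1 ∈ V_1 and u_2 ∈ V_2 the cross-term identity (u_1, d_τ(u_2))_{s_τ} = (b_τ(u_1), c_τ(u_2))_{m_τ} holds, where (v_1, v)_{s_τ} = (v_1, v) - (b_τ(v_1), b_τ(v))_{m_τ}. -/
import Mathlib


open RealInnerProductSpace

theorem stmt13 {V : Type*} [NormedAddCommGroup V] [InnerProductSpace ℝ V]
    [FiniteDimensional ℝ V]
    (a : V →ₗ[ℝ] V →ₗ[ℝ] ℝ) (hsymm : ∀ x y, a x y = a y x)
    (hpd : ∀ v : V, v ≠ 0 → 0 < a v v)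
    (τ : ℝ) (hτ : 0 < τ)
    (V1 V2 : Submodule ℝ V) (b c d : V → V)
    (hbmem : ∀ v1 ∈ V1, b v1 ∈ V1)
    (hb : ∀ v1 ∈ V1, ∀ v ∈ V1,
      ⟪b v1, v⟫ + (τ^2 / 2) * a (b v1) v = ⟪v1, v⟫)
    (hcmem : ∀ u ∈ V1 ⊔ V2, c u ∈ V1)
    (hc : ∀ u ∈ V1 ⊔ V2, ∀ v ∈ V1,
      ⟪c u, v⟫ + (τ^2 / 2) * a (c u) v = (τ^2 / 2) * a u v)
    (hdmem : ∀ u ∈ V1 ⊔ V2, d u ∈ V1)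
    (hd : ∀ u ∈ V1 ⊔ V2, ∀ v ∈ V1, a (d u) v = a u v) :
    ∀ u1 ∈ V1, ∀ u2 ∈ V2,
      ⟪u1, d u2⟫
          - (⟪b u1, b (d u2)⟫ + (τ^2 / 2) * a (b u1) (b (d u2)))
        = ⟪b u1, c u2⟫ + (τ^2 / 2) * a (b u1) (c u2) := by
  intro u1 h1 u2 h2
  have hu2 : u2 ∈ V1 ⊔ V2 := Submodule.mem_sup_right h2
  have hw := hdmem u2 hu2
  have hbu1 := hbmem u1 h1
  have e1 := hb u1 h1 (d u2) hw
  have e2 := hb (d u2) hw (b u1) hbu1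
  have e3 := hc u2 hu2 (b u1) hbu1
  have e4 := hd u2 hu2 (b u1) hbu1
  rw [real_inner_comm (d u2) (b u1), hsymm (b u1) (d u2)] at e1
  rw [real_inner_comm (b (d u2)) (b u1), hsymm (b u1) (b (d u2)),
      real_inner_comm (c u2) (b u1), hsymm (b u1) (c u2)]
  linear_combination -e1 - e2 - e3 + (τ^2/2) * e4
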